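/- Let σ₀ ∈ (0,1), set c = log(1/σ₀), and let A ∈ ℝ. Let g, ĝ : ℕ₊ → [0, σ₀) be two nondecreasing sequences with g(k) ≥ ĝ(k) for every positive integer k. Define β(δ) = ∏_{k=1}^{δ−1} (1 − g(k)/σ₀) and β̂(δ) = ∏_{k=1}^{δ−1} (1 − ĝ(k)/σ₀) (empty products equal 1). Let δ* be the least positive integer satisfying δ ≥ (A − log(1/β(δ)))/c, and let δ̂* be the least positive integer satisfying δ ≥ (A − log(1/β̂(δ)))/c (both exist, since every positive integer δ ≥ A/c is feasible for either constraint). Then δ* ≤ δ̂*. -/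

import Mathlib

/-- Corollary 3: scheduling edges earlier (a pointwise larger cumulative
connectivity gain `g ≥ ĝ`) yields a smaller optimal mixing time `δ* ≤ δ̂*`. -/
theorem stmt10 (σ₀ : ℝ) (hσ : σ₀ ∈ Set.Ioo (0 : ℝ) 1) (c A : ℝ)
    (hc : c = Real.log (1 / σ₀))
    (g g' : ℕ → ℝ)
    (hg : ∀ k, 1 ≤ k → g k ∈ Set.Ico 0 σ₀) (hg' : ∀ k, 1 ≤ k → g' k ∈ Set.Ico 0 σ₀)
    (hgmono : ∀ k k', 1 ≤ k → k ≤ k' → g k ≤ g k')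
    (hg'mono : ∀ k k', 1 ≤ k → k ≤ k' → g' k ≤ g' k')
    (hdom : ∀ k, 1 ≤ k → g' k ≤ g k)
    (β β' : ℕ → ℝ)
    (hβ : ∀ δ, β δ = ∏ k ∈ Finset.Icc 1 (δ - 1), (1 - g k / σ₀))
    (hβ' : ∀ δ, β' δ = ∏ k ∈ Finset.Icc 1 (δ - 1), (1 - g' k / σ₀))
    (δstar δ'star : ℕ)
    (h1 : IsLeast {δ : ℕ | 0 < δ ∧ (δ : ℝ) ≥ (A - Real.log (1 / β δ)) / c} δstar)
    (h2 : IsLeast {δ : ℕ | 0 < δ ∧ (δ : ℝ) ≥ (A - Real.log (1 / β' δ)) / c} δ'star) :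
    δstar ≤ δ'star := by
  obtain ⟨hσ0, hσ1⟩ := hσ
  have hc0 : 0 < c := by
    rw [hc]
    exact Real.log_pos (by rw [lt_div_iff₀ hσ0]; linarith)
  have hpos : ∀ k, 1 ≤ k → (0:ℝ) < 1 - g k / σ₀ := fun k hk => by
    have h := (hg k hk).2
    have : g k / σ₀ < 1 := (div_lt_one hσ0).2 h
    linarith
  have hpos' : ∀ k, 1 ≤ k → (0:ℝ) < 1 - g' k / σ₀ := fun k hk => by
    have h := (hg' k hk).2
    have : g' k / σ₀ < 1 := (div_lt_one hσ0).2 h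
    linarith
  set δ := δ'star with hδ
  have hβpos : 0 < β δ := by
    rw [hβ]
    exact Finset.prod_pos fun k hk => hpos k (Finset.mem_Icc.1 hk).1
  have hβ'pos : 0 < β' δ := by
    rw [hβ']
    exact Finset.prod_pos fun k hk => hpos' k (Finset.mem_Icc.1 hk).1
  have hle : β δ ≤ β' δ := by
    rw [hβ, hβ']
    apply Finset.prod_le_prod
    · exact fun k hk => (hpos k (Finset.mem_Icc.1 hk).1).le
    · intro k hk
      have hd := hdom k (Finset.mem_Icc.1 hk).1
      have : g' k / σ₀ ≤ g k / σ₀ := by gcongr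
      linarith
  have hlog : Real.log (1 / β' δ) ≤ Real.log (1 / β δ) := by
    apply Real.log_le_log (by positivity)
    exact one_div_le_one_div_of_le hβpos hle
  obtain ⟨⟨hδpos, hδineq⟩, _⟩ := h2
  have key : (A - Real.log (1 / β δ)) / c ≤ (A - Real.log (1 / β' δ)) / c := by
    gcongr
  exact h1.2 ⟨hδpos, le_trans key hδineq⟩
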